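/- arXiv:2010.08855 — 3 statements merged into one kernel-verified Lean document; each statement's English description precedes it below -/
import Mathlib

section
/- Let F be a field, n a positive integer, and D a nonzero n × n matrix over F. Let S be a nonempty finite subset of F with |S| = s. Then the number of vectors r ∈ Sⁿ (i.e., functions from Fin n to S) satisfying D · r = 0 is at most s^(n−1). -/
/-- **Freivalds' lemma, counting form.** If `D` is a nonzero `n × n` matrix over a
field `F` and `S ⊆ F` is a nonempty finite set with `|S| = s`, then the number of
vectors `r ∈ Sⁿ` with `D · r = 0` is at most `s^(n−1)`. -/
theorem freivalds_counting
    (F : Type*) [Field F] [DecidableEq F]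
    (n : ℕ) (hn : 0 < n)
    (D : Matrix (Fin n) (Fin n) F) (hD : D ≠ 0)
    (S : Finset F) (hS : S.Nonempty) (s : ℕ) (hs : S.card = s) :
    ((Fintype.piFinset fun _ : Fin n => S).filter
        fun r => D.mulVec r = 0).card ≤ s ^ (n - 1) := by
  classical
  obtain ⟨i, j, hij⟩ : ∃ i j, D i j ≠ 0 := by
    by_contra h
    push_neg at h
    exact hD (by ext i j; simp [h])
  have key := Finset.card_le_card_of_injOn
    (f := fun (r : Fin n → F) (k : {k : Fin n // k ≠ j}) => r k.1)
    (s := (Fintype.piFinset fun _ : Fin n => S).filter fun r => D.mulVec r = 0)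
    (t := Fintype.piFinset fun _ : {k : Fin n // k ≠ j} => S)
    (by
      intro r hr
      simp only [Finset.mem_coe, Finset.mem_filter, Fintype.mem_piFinset] at hr ⊢
      exact fun k => hr.1 k.1)
    (by
      intro r hr r' hr' h
      simp only [Finset.coe_filter, Set.mem_setOf_eq, Fintype.mem_piFinset] at hr hr'
      have hne : ∀ k ≠ j, r k = r' k := fun k hk => congrFun h ⟨k, hk⟩
      have hrow : ∀ (v : Fin n → F), D.mulVec v = 0 → ∑ k, D i k * v k = 0 := by
        intro v hv
        have := congrFun hv i
        simpa [Matrix.mulVec, dotProduct] using this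
      have hsum : ∑ k, D i k * (r k - r' k) = 0 := by
        simp only [mul_sub, Finset.sum_sub_distrib, hrow r hr.2, hrow r' hr'.2, sub_zero]
      rw [Finset.sum_eq_single j] at hsum
      · have : r j = r' j :=
          sub_eq_zero.mp ((mul_eq_zero.mp hsum).resolve_left hij)
        funext k
        by_cases hk : k = j
        · rw [hk]; exact this
        · exact hne k hk
      · intro b _ hb
        rw [hne b hb, sub_self, mul_zero]
      · intro hj; exact absurd (Finset.mem_univ j) hj)
  refine key.trans ?_
  rw [Fintype.card_piFinset]
  simp only [Finset.prod_const, Finset.card_univ, hs]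
  have : Fintype.card {k : Fin n // k ≠ j} = n - 1 := by
    simp [Fintype.card_subtype_compl]
  rw [this]
end

section
/- Let F be a field, n a positive integer, and let A, B, C be n × n matrices over F with A·B ≠ C. Let S be a nonempty finite subset of F with |S| = s, and draw r uniformly from Sⁿ. Then the probability that A·(B·r) = C·r is at most 1/s. -/
open scoped ENNReal

lemma freivalds_card_bound
    (F : Type*) [Field F] [DecidableEq F]
    (n : ℕ) (d : Fin n → F) (j : Fin n) (hdj : d j ≠ 0)
    (S : Finset F) (hS : S.Nonempty) :
    ((Fintype.piFinset fun _ : Fin n => S).filter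
        (fun r => ∑ k, d k * r k = 0)).card ≤ S.card ^ (n - 1) := by
  obtain ⟨c, hc⟩ := hS
  have hinj : Set.InjOn (fun r => Function.update r j c)
      (((Fintype.piFinset fun _ : Fin n => S).filter (fun r => ∑ k, d k * r k = 0) :
        Finset (Fin n → F)) : Set (Fin n → F)) := by
    intro r hr r' hr' h
    simp only [Finset.coe_filter, Set.mem_setOf_eq] at hr hr'
    have hk : ∀ k, k ≠ j → r k = r' k := by
      intro k hk
      have := congrFun h k
      simpa [Function.update, hk] using this
    funext k
    by_cases hkj : k = j
    · subst hkj
      have h1 : d k * r k + ∑ i ∈ Finset.univ.erase k, d i * r i = 0 := by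
        rw [← hr.2]; exact Finset.add_sum_erase _ (fun i => d i * r i) (Finset.mem_univ k)
      have h2 : d k * r' k + ∑ i ∈ Finset.univ.erase k, d i * r' i = 0 := by
        rw [← hr'.2]; exact Finset.add_sum_erase _ (fun i => d i * r' i) (Finset.mem_univ k)
      have hsum : ∑ i ∈ Finset.univ.erase k, d i * r i
          = ∑ i ∈ Finset.univ.erase k, d i * r' i := by
        refine Finset.sum_congr rfl fun i hi => ?_
        rw [hk i (Finset.mem_erase.1 hi).1]
      have : d k * r k = d k * r' k := by linear_combination h1 - h2 - hsum
      exact mul_left_cancel₀ hdj this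
    · exact hk k hkj
  calc ((Fintype.piFinset fun _ : Fin n => S).filter
        (fun r => ∑ k, d k * r k = 0)).card
      ≤ (Fintype.piFinset fun k : Fin n => if k = j then {c} else S).card := by
        refine Finset.card_le_card_of_injOn _ ?_ hinj
        intro r hr
        simp only [Finset.mem_coe, Finset.mem_filter, Fintype.mem_piFinset] at hr ⊢
        intro k
        by_cases hkj : k = j
        · subst hkj; simp [Function.update]
        · simp [Function.update, hkj, hr.1 k]
    _ = S.card ^ (n - 1) := by
        rw [Fintype.card_piFinset]
        rw [← Finset.prod_erase_mul _ _ (Finset.mem_univ j)]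
        simp only [if_pos rfl, if_true, Finset.card_singleton, mul_one]
        rw [Finset.prod_congr rfl (fun k hk => by
          rw [if_neg (Finset.mem_erase.1 hk).1]),
          Finset.prod_const, Finset.card_erase_of_mem (Finset.mem_univ j),
          Finset.card_univ, Fintype.card_fin]

/-- **Freivalds' check.** If `A·B ≠ C` for `n × n` matrices over a field `F`, and `r`
is drawn uniformly from `Sⁿ` for a nonempty finite `S ⊆ F` with `|S| = s`, then the
probability that `A·(B·r) = C·r` is at most `1/s`. -/
theorem freivalds_check
    (F : Type*) [Field F] [DecidableEq F]
    (n : ℕ) (hn : 0 < n)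
    (A B C : Matrix (Fin n) (Fin n) F) (hABC : A * B ≠ C)
    (S : Finset F) (hS : S.Nonempty) (s : ℕ) (hs : S.card = s) :
    (PMF.uniformOfFinset (Fintype.piFinset fun _ : Fin n => S)
          (Fintype.piFinset_nonempty.mpr fun _ => hS)).toOuterMeasure
        {r | A.mulVec (B.mulVec r) = C.mulVec r} ≤ 1 / (s : ℝ≥0∞) := by
  have hs0 : 0 < s := hs ▸ Finset.card_pos.2 hS
  set D := A * B - C with hD
  have hDne : D ≠ 0 := sub_ne_zero.2 hABC
  obtain ⟨i, j, hij⟩ : ∃ i j, D i j ≠ 0 := by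
    by_contra h
    push_neg at h
    exact hDne (Matrix.ext fun i j => h i j)
  rw [PMF.toOuterMeasure_uniformOfFinset_apply]
  have hsub : ((Fintype.piFinset fun _ : Fin n => S).filter
        (· ∈ {r | A.mulVec (B.mulVec r) = C.mulVec r})).card
      ≤ ((Fintype.piFinset fun _ : Fin n => S).filter
        (fun r => ∑ k, D i k * r k = 0)).card := by
    apply Finset.card_le_card
    intro r hr
    simp only [Finset.mem_filter, Set.mem_setOf_eq] at hr ⊢
    refine ⟨hr.1, ?_⟩
    have hmv : D.mulVec r = 0 := by
      rw [hD, Matrix.sub_mulVec, ← Matrix.mulVec_mulVec, hr.2, sub_self]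
    have := congrFun hmv i
    simpa [Matrix.mulVec, dotProduct] using this
  have hbound := hsub.trans (freivalds_card_bound F n (D i) j hij S hS)
  rw [hs] at hbound
  have hcard : ((Fintype.piFinset fun _ : Fin n => S).card : ℝ≥0∞) = (s : ℝ≥0∞) ^ n := by
    rw [Fintype.card_piFinset]; simp [hs]
  rw [hcard]
  calc _ ≤ ((s : ℝ≥0∞) ^ (n - 1)) / (s : ℝ≥0∞) ^ n := by
        gcongr
        norm_cast
        exact le_trans (le_of_eq (by congr!)) hbound
    _ = 1 / (s : ℝ≥0∞) := by
        have hsne : (s : ℝ≥0∞) ≠ 0 := by exact_mod_cast hs0.ne'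
        have hstop : (s : ℝ≥0∞) ≠ ⊤ := ENNReal.natCast_ne_top s
        have hpow : (s : ℝ≥0∞) ^ n = (s : ℝ≥0∞) ^ (n - 1) * s := by
          rw [← pow_succ, Nat.sub_add_cancel hn]
        rw [hpow, div_eq_mul_inv,
          ENNReal.mul_inv (Or.inl (pow_ne_zero _ hsne)) (Or.inl (ENNReal.pow_ne_top hstop)),
          ← mul_assoc, ENNReal.mul_inv_cancel (pow_ne_zero _ hsne)
            (ENNReal.pow_ne_top hstop), one_mul, one_div]
end

section
/- Let F be a field, n a positive integer, and let A, B, C be n × n matrices over F with A·B ≠ C. Let S be a nonempty finite subset of F with |S| = s, and let k be a positive integer. If k random vectors r₁, …, r_k are drawn independently and uniformly from Sⁿ, then the probability that A·(B·r_j) = C·r_j holds for every j = 1, …, k is at most 1/s^k. -/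
open scoped ENNReal

open Finset in
lemma freivalds_hyperplane_count
    (F : Type*) [Field F] [DecidableEq F] (n : ℕ)
    (v : Fin n → F) (j₀ : Fin n) (hv : v j₀ ≠ 0) (S : Finset F) :
    ((Fintype.piFinset fun _ : Fin n => S).filter
        fun r => ∑ i, v i * r i = 0).card ≤ S.card ^ (n - 1) := by
  have hcard : (Fintype.piFinset fun _ : {j : Fin n // j ≠ j₀} => S).card
      = S.card ^ (n - 1) := by
    rw [Fintype.card_piFinset, Finset.prod_const, Finset.card_univ]
    congr 1
    simp [Fintype.card_subtype_compl, Fintype.card_fin]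
  rw [← hcard]
  apply Finset.card_le_card_of_injOn (fun r (j : {j : Fin n // j ≠ j₀}) => r j.1)
  · intro r hr
    simp only [Finset.mem_coe, Finset.mem_filter, Fintype.mem_piFinset] at hr ⊢
    exact fun j => hr.1 j.1
  · intro r hr r' hr' h
    simp only [Finset.coe_filter, Set.mem_setOf_eq, Fintype.mem_piFinset] at hr hr'
    have hrest : ∀ i : Fin n, i ≠ j₀ → r i = r' i := fun i hi =>
      congrFun h ⟨i, hi⟩
    have hsum : ∑ i ∈ ({j₀}ᶜ : Finset (Fin n)), v i * r i
        = ∑ i ∈ ({j₀}ᶜ : Finset (Fin n)), v i * r' i := by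
      apply Finset.sum_congr rfl
      intro i hi
      rw [hrest i (by simpa using hi)]
    have h1 := hr.2
    have h2 := hr'.2
    rw [← Finset.sum_add_sum_compl {j₀}] at h1 h2
    simp only [Finset.sum_singleton] at h1 h2
    rw [hsum] at h1
    have : v j₀ * r j₀ = v j₀ * r' j₀ := by
      have := h1.trans h2.symm
      exact add_right_cancel this
    have hj : r j₀ = r' j₀ := mul_left_cancel₀ hv this
    funext i
    by_cases hij : i = j₀
    · rw [hij, hj]
    · exact hrest i hij

/-- **Repeated Freivalds' check.** If `A·B ≠ C` for `n × n` matrices over a field `F`,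
and `k` random vectors `r₁, …, r_k` are drawn independently and uniformly from `Sⁿ`
(`S ⊆ F` nonempty finite, `|S| = s`), then the probability that `A·(B·r_j) = C·r_j`
holds for every `j` is at most `1/s^k`. -/
theorem freivalds_check_repeated
    (F : Type*) [Field F] [DecidableEq F]
    (n : ℕ) (hn : 0 < n) (k : ℕ) (hk : 0 < k)
    (A B C : Matrix (Fin n) (Fin n) F) (hABC : A * B ≠ C)
    (S : Finset F) (hS : S.Nonempty) (s : ℕ) (hs : S.card = s) :
    (PMF.uniformOfFinset
          (Fintype.piFinset fun _ : Fin k => Fintype.piFinset fun _ : Fin n => S)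
          (Fintype.piFinset_nonempty.mpr fun _ =>
            Fintype.piFinset_nonempty.mpr fun _ => hS)).toOuterMeasure
        {r | ∀ j : Fin k, A.mulVec (B.mulVec (r j)) = C.mulVec (r j)} ≤
      1 / (s : ℝ≥0∞) ^ k := by
  subst hs
  set D := A * B - C with hD
  have hDne : D ≠ 0 := sub_ne_zero.mpr hABC
  obtain ⟨i₀, j₀, hij⟩ : ∃ i j, D i j ≠ 0 := by
    by_contra h
    push_neg at h
    exact hDne (by ext i j; simpa using h i j)
  set Bad : Finset (Fin n → F) :=
    (Fintype.piFinset fun _ : Fin n => S).filter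
      (fun r => ∑ i, D i₀ i * r i = 0) with hBad
  have hBadcard : Bad.card ≤ S.card ^ (n - 1) :=
    freivalds_hyperplane_count F n (D i₀) j₀ hij S
  rw [PMF.toOuterMeasure_uniformOfFinset_apply]
  have hsubset : (Fintype.piFinset fun _ : Fin k =>
        Fintype.piFinset fun _ : Fin n => S).filter
      (· ∈ {r : Fin k → Fin n → F |
        ∀ j : Fin k, A.mulVec (B.mulVec (r j)) = C.mulVec (r j)}) ⊆
      Fintype.piFinset fun _ : Fin k => Bad := by
    intro r hr
    simp only [Finset.mem_filter, Fintype.mem_piFinset, Set.mem_setOf_eq] at hr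
    rw [Fintype.mem_piFinset]
    intro j
    rw [hBad, Finset.mem_filter]
    refine ⟨by rw [Fintype.mem_piFinset]; exact hr.1 j, ?_⟩
    have h0 : D.mulVec (r j) = 0 := by
      have h := hr.2 j
      rw [Matrix.mulVec_mulVec] at h
      rw [hD, Matrix.sub_mulVec, h, sub_self]
    have := congrFun h0 i₀
    simpa [Matrix.mulVec, dotProduct] using this
  have hcount : ((Fintype.piFinset fun _ : Fin k =>
        Fintype.piFinset fun _ : Fin n => S).filter
      (· ∈ {r : Fin k → Fin n → F |
        ∀ j : Fin k, A.mulVec (B.mulVec (r j)) = C.mulVec (r j)})).card ≤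
      (S.card ^ (n - 1)) ^ k := by
    calc _ ≤ (Fintype.piFinset fun _ : Fin k => Bad).card :=
          Finset.card_le_card hsubset
      _ = Bad.card ^ k := Fintype.card_piFinset_const _ _
      _ ≤ (S.card ^ (n - 1)) ^ k := Nat.pow_le_pow_left hBadcard k
  have hT : (((Fintype.piFinset fun _ : Fin k =>
        Fintype.piFinset fun _ : Fin n => S).card : ℕ) : ℝ≥0∞)
      = ((S.card : ℝ≥0∞) ^ n) ^ k := by
    rw [Fintype.card_piFinset_const]
    rw [Fintype.card_piFinset_const]
    push_cast
    ring
  rw [hT]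
  have hne0 : ((S.card : ℝ≥0∞) ^ (n - 1)) ^ k ≠ 0 := by
    have : (S.card : ℝ≥0∞) ≠ 0 := by
      simpa using Finset.card_pos.mpr hS |>.ne'
    positivity
  have hnetop : ((S.card : ℝ≥0∞) ^ (n - 1)) ^ k ≠ ⊤ :=
    ENNReal.pow_ne_top (ENNReal.pow_ne_top (ENNReal.natCast_ne_top _))
  have hsplit : ((S.card : ℝ≥0∞) ^ n) ^ k
      = ((S.card : ℝ≥0∞) ^ (n - 1)) ^ k * (S.card : ℝ≥0∞) ^ k := by
    rw [← mul_pow, ← pow_succ, Nat.sub_add_cancel hn]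
  calc _ ≤ (((S.card ^ (n - 1)) ^ k : ℕ) : ℝ≥0∞) / ((S.card : ℝ≥0∞) ^ n) ^ k :=
        ENNReal.div_le_div_right
          (Nat.cast_le.mpr (le_trans (le_of_eq (by congr)) hcount)) _
    _ = ((S.card : ℝ≥0∞) ^ (n - 1)) ^ k * 1 /
        (((S.card : ℝ≥0∞) ^ (n - 1)) ^ k * (S.card : ℝ≥0∞) ^ k) := by
        rw [mul_one, hsplit]; push_cast; ring_nf
    _ = 1 / (S.card : ℝ≥0∞) ^ k := ENNReal.mul_div_mul_left _ _ hne0 hnetop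
end
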